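/- For every real a ≥ 0, every integer n ≥ 1, all reals 0 ≤ α ≤ β and every x ≥ 0, the first moment of the Stancu-type operator is L_{n,a}^{α,β}(t;x) = (n/(n+β))·x + (a/(n+β))·x/(1+x) + α/(n+β). -/

import Mathlib

open MeasureTheory Filter

/-- Rising factorial `(n)_i = n(n+1)⋯(n+i−1)`, with `(n)_0 = 1`. -/
noncomputable def risingFac (n i : ℕ) : ℝ := ∏ j ∈ Finset.range i, ((n : ℝ) + j)

/-- `p_k(n,a) = Σ_{i=0}^{k} C(k,i)·(n)_i·a^{k−i}`. -/
noncomputable def pCoef (n : ℕ) (a : ℝ) (k : ℕ) : ℝ :=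
  ∑ i ∈ Finset.range (k + 1), (Nat.choose k i : ℝ) * risingFac n i * a ^ (k - i)

/-- Generalized Baskakov basis function `W_{n,k}^a(x)`. -/
noncomputable def W (n : ℕ) (a : ℝ) (k : ℕ) (x : ℝ) : ℝ :=
  Real.exp (-(a * x) / (1 + x)) * (pCoef n a k / (Nat.factorial k : ℝ)) * x ^ k /
    (1 + x) ^ (k + n)

/-- Stancu-type operator `L_{n,a}^{α,β}(f;x) = Σ_k W_{n,k}^a(x) f((k+α)/(n+β))`. -/
noncomputable def Lop (n : ℕ) (a α β : ℝ) (f : ℝ → ℝ) (x : ℝ) : ℝ :=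
  ∑' k : ℕ, W n a k x * f (((k : ℝ) + α) / ((n : ℝ) + β))

/-- Generalized Baskakov–Kantorovich–Stancu operator `T_{n,a}^{α,β}(f;x)`. -/
noncomputable def TKS (n : ℕ) (a α β : ℝ) (f : ℝ → ℝ) (x : ℝ) : ℝ :=
  ((n : ℝ) + β) *
    ∑' k : ℕ, W n a k x *
      ∫ t in (((k : ℝ) + α) / ((n : ℝ) + β))..(((k : ℝ) + α + 1) / ((n : ℝ) + β)), f t



lemma risingFac_eq_ascFactorial (n i : ℕ) : risingFac n i = (n.ascFactorial i : ℝ) := by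
  induction i with
  | zero => simp [risingFac]
  | succ k ih =>
      rw [risingFac, Finset.prod_range_succ, ← risingFac, ih, Nat.ascFactorial_succ]
      push_cast; ring

lemma risingFac_div_factorial (n i : ℕ) (hn : 1 ≤ n) :
    risingFac n i / (Nat.factorial i : ℝ) = ((i + (n - 1)).choose (n - 1) : ℝ) := by
  rw [risingFac_eq_ascFactorial]
  have h := Nat.ascFactorial_eq_factorial_mul_choose' n i
  have h2 : (n + i - 1).choose i = (i + (n - 1)).choose (n - 1) := by
    have e1 : n + i - 1 = i + (n - 1) := by omega
    rw [e1]
    have h3 := Nat.choose_symm (n := i + (n - 1)) (k := i) (Nat.le_add_right _ _)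
    rw [Nat.add_sub_cancel_left] at h3
    exact h3.symm
  rw [h, h2]
  push_cast
  rw [mul_comm, mul_div_assoc, div_self (by positivity), mul_one]

lemma hasSum_rising (n : ℕ) (hn : 1 ≤ n) {t : ℝ} (h1 : |t| < 1) :
    HasSum (fun i => risingFac n i / (Nat.factorial i : ℝ) * t ^ i) (1 / (1 - t) ^ n) := by
  have h := hasSum_choose_mul_geometric_of_norm_lt_one (𝕜 := ℝ) (n - 1) (r := t) (by simpa using h1)
  have hn1 : n - 1 + 1 = n := by omega
  rw [hn1] at h
  have e : (fun i => risingFac n i / (Nat.factorial i : ℝ) * t ^ i)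
      = fun i => ((i + (n - 1)).choose (n - 1) : ℝ) * t ^ i :=
    funext fun i => by rw [risingFac_div_factorial n i hn]
  rw [e]; exact h

lemma hasSum_exp_div (y : ℝ) : HasSum (fun j => y ^ j / (Nat.factorial j : ℝ)) (Real.exp y) := by
  rw [Real.exp_eq_exp_ℝ]
  exact NormedSpace.expSeries_div_hasSum_exp y

lemma risingFac_nonneg (n i : ℕ) : 0 ≤ risingFac n i := by
  unfold risingFac; positivity


lemma risingFac_succ_left (n i : ℕ) : risingFac n (i + 1) = n * risingFac (n + 1) i := by
  simp only [risingFac, Finset.prod_range_succ']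
  rw [mul_comm]
  congr 1
  · push_cast; ring
  · exact Finset.prod_congr rfl fun j _ => by push_cast; ring

lemma hasSum_rising_moment (n : ℕ) (hn : 1 ≤ n) {t : ℝ} (h1 : |t| < 1) :
    HasSum (fun i : ℕ => (i : ℝ) * (risingFac n i / (Nat.factorial i : ℝ) * t ^ i))
      ((n : ℝ) * t * (1 / (1 - t) ^ (n + 1))) := by
  have h := (hasSum_rising (n + 1) (by omega) h1).mul_left ((n : ℝ) * t)
  have key : ∀ i : ℕ,
      (((i + 1 : ℕ) : ℝ) * (risingFac n (i + 1) / (Nat.factorial (i + 1) : ℝ) * t ^ (i + 1)))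
        = ((n : ℝ) * t) * (risingFac (n + 1) i / (Nat.factorial i : ℝ) * t ^ i) := by
    intro i
    rw [risingFac_succ_left, Nat.factorial_succ]
    have hi : ((i : ℝ) + 1) ≠ 0 := by positivity
    have hf : ((Nat.factorial i : ℝ)) ≠ 0 := by positivity
    push_cast
    field_simp
    ring
  refine (hasSum_nat_add_iff' (f := fun i : ℕ => (i : ℝ) *
    (risingFac n i / (Nat.factorial i : ℝ) * t ^ i)) 1).mp ?_
  simp only [Finset.range_one, Finset.sum_singleton, Nat.cast_zero, zero_mul, sub_zero]
  exact h.congr_fun key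

lemma hasSum_exp_moment (y : ℝ) :
    HasSum (fun j : ℕ => (j : ℝ) * (y ^ j / (Nat.factorial j : ℝ))) (y * Real.exp y) := by
  have h := (hasSum_exp_div y).mul_left y
  have key : ∀ j : ℕ,
      (((j + 1 : ℕ) : ℝ) * (y ^ (j + 1) / (Nat.factorial (j + 1) : ℝ)))
        = y * (y ^ j / (Nat.factorial j : ℝ)) := by
    intro j
    rw [Nat.factorial_succ, pow_succ]
    have hf : ((Nat.factorial j : ℝ)) ≠ 0 := by positivity
    push_cast
    field_simp
  refine (hasSum_nat_add_iff' (f := fun j : ℕ => (j : ℝ) * (y ^ j / (Nat.factorial j : ℝ))) 1).mp ?_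
  simp only [Finset.range_one, Finset.sum_singleton, Nat.cast_zero, zero_mul, sub_zero]
  exact h.congr_fun key

theorem Lop_first_moment (a : ℝ) (ha : 0 ≤ a) (n : ℕ) (hn : 1 ≤ n) (α β : ℝ)
    (hα : 0 ≤ α) (hαβ : α ≤ β) (x : ℝ) (hx : 0 ≤ x) :
    Lop n a α β (fun t => t) x =
      ((n : ℝ) / ((n : ℝ) + β)) * x + (a / ((n : ℝ) + β)) * (x / (1 + x)) +
        α / ((n : ℝ) + β) := by
  have hx1 : (0:ℝ) < 1 + x := by linarith
  have hβ0 : (0:ℝ) ≤ β := le_trans hα hαβ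
  have hnβ : (0:ℝ) < (n : ℝ) + β := by
    have : (1:ℝ) ≤ (n : ℝ) := by exact_mod_cast hn
    linarith
  set t : ℝ := x / (1 + x) with htdef
  have ht0 : 0 ≤ t := by positivity
  have ht1 : t < 1 := by rw [htdef, div_lt_one hx1]; linarith
  have habs : |t| < 1 := by rw [abs_of_nonneg ht0]; exact ht1
  have h1t : 1 - t = 1 / (1 + x) := by rw [htdef]; field_simp; ring
  have hat : a * t = a * x / (1 + x) := by rw [htdef]; ring
  set u : ℕ → ℝ := fun i => risingFac n i / (Nat.factorial i : ℝ) * t ^ i with hu_def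
  set v : ℕ → ℝ := fun j => (a * t) ^ j / (Nat.factorial j : ℝ) with hv_def
  set u' : ℕ → ℝ := fun i => (i : ℝ) * u i with hu'_def
  set v' : ℕ → ℝ := fun j => (j : ℝ) * v j with hv'_def
  have hu : HasSum u (1 / (1 - t) ^ n) := hasSum_rising n hn habs
  have hv : HasSum v (Real.exp (a * t)) := hasSum_exp_div (a * t)
  have hu' : HasSum u' ((n : ℝ) * t * (1 / (1 - t) ^ (n + 1))) := hasSum_rising_moment n hn habs
  have hv' : HasSum v' ((a * t) * Real.exp (a * t)) := hasSum_exp_moment (a * t)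
  have hu0 : ∀ i, 0 ≤ u i := fun i => by
    have := risingFac_nonneg n i; positivity
  have hv0 : ∀ j, 0 ≤ v j := fun j => by positivity
  have hu'0 : ∀ i, 0 ≤ u' i := fun i => mul_nonneg (by positivity) (hu0 i)
  have hv'0 : ∀ j, 0 ≤ v' j := fun j => mul_nonneg (by positivity) (hv0 j)
  have nu : Summable (fun i => ‖u i‖) :=
    hu.summable.congr fun i => (Real.norm_of_nonneg (hu0 i)).symm
  have nv : Summable (fun j => ‖v j‖) :=
    hv.summable.congr fun j => (Real.norm_of_nonneg (hv0 j)).symm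
  have nu' : Summable (fun i => ‖u' i‖) :=
    hu'.summable.congr fun i => (Real.norm_of_nonneg (hu'0 i)).symm
  have nv' : Summable (fun j => ‖v' j‖) :=
    hv'.summable.congr fun j => (Real.norm_of_nonneg (hv'0 j)).symm
  -- Cauchy products
  have hg : HasSum (fun k => ∑ i ∈ Finset.range (k + 1), u i * v (k - i))
      ((1 / (1 - t) ^ n) * Real.exp (a * t)) := by
    have h := hasSum_sum_range_mul_of_summable_norm nu nv
    rwa [hu.tsum_eq, hv.tsum_eq] at h
  have hg1 : HasSum (fun k => ∑ i ∈ Finset.range (k + 1), u' i * v (k - i))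
      (((n : ℝ) * t * (1 / (1 - t) ^ (n + 1))) * Real.exp (a * t)) := by
    have h := hasSum_sum_range_mul_of_summable_norm nu' nv
    rwa [hu'.tsum_eq, hv.tsum_eq] at h
  have hg2 : HasSum (fun k => ∑ i ∈ Finset.range (k + 1), u i * v' (k - i))
      ((1 / (1 - t) ^ n) * ((a * t) * Real.exp (a * t))) := by
    have h := hasSum_sum_range_mul_of_summable_norm nu nv'
    rwa [hu.tsum_eq, hv'.tsum_eq] at h
  -- W in terms of the Cauchy product
  set E : ℝ := Real.exp (-(a * x) / (1 + x)) * (1 / (1 + x)) ^ n with hE_def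
  have hW : ∀ k, W n a k x = E * ∑ i ∈ Finset.range (k + 1), u i * v (k - i) := by
    intro k
    have hconv : ∑ i ∈ Finset.range (k + 1), u i * v (k - i)
        = pCoef n a k / (Nat.factorial k : ℝ) * t ^ k := by
      rw [pCoef, Finset.sum_div, Finset.sum_mul]
      refine Finset.sum_congr rfl fun i hi => ?_
      have hik : i ≤ k := Nat.lt_succ_iff.mp (Finset.mem_range.mp hi)
      have hfac : ((Nat.choose k i : ℝ)) * (Nat.factorial i : ℝ) * (Nat.factorial (k - i) : ℝ)
          = (Nat.factorial k : ℝ) := by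
        exact_mod_cast congrArg (Nat.cast : ℕ → ℝ) (Nat.choose_mul_factorial_mul_factorial hik)
      have htk : t ^ i * t ^ (k - i) = t ^ k := by
        rw [← pow_add]; congr 1; omega
      simp only [hu_def, hv_def]
      rw [mul_pow]
      have h1 : risingFac n i / (Nat.factorial i : ℝ) * t ^ i *
          (a ^ (k - i) * t ^ (k - i) / (Nat.factorial (k - i) : ℝ))
          = risingFac n i * a ^ (k - i) * (t ^ i * t ^ (k - i)) /
            ((Nat.factorial i : ℝ) * (Nat.factorial (k - i) : ℝ)) := by
        field_simp
      rw [h1, htk]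
      rw [← hfac]
      have hfi : (Nat.factorial i : ℝ) ≠ 0 := by positivity
      have hfki : (Nat.factorial (k - i) : ℝ) ≠ 0 := by positivity
      have hch : (0:ℝ) < (Nat.choose k i : ℝ) := by
        exact_mod_cast Nat.choose_pos hik
      field_simp
    rw [hconv, W, hE_def, htdef]
    rw [div_pow, pow_add]
    field_simp
    have hinv' : ((1 + x)⁻¹) ^ k * (1 + x) ^ k = 1 := by
      rw [← mul_pow, inv_mul_cancel₀ hx1.ne', one_pow]
    linear_combination (-(pCoef n a k * x ^ k)) * hinv'
  -- identity k * g k = g1 k + g2 k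
  have hk : ∀ k : ℕ, (k : ℝ) * ∑ i ∈ Finset.range (k + 1), u i * v (k - i)
      = (∑ i ∈ Finset.range (k + 1), u' i * v (k - i))
        + ∑ i ∈ Finset.range (k + 1), u i * v' (k - i) := by
    intro k
    rw [Finset.mul_sum, ← Finset.sum_add_distrib]
    refine Finset.sum_congr rfl fun i hi => ?_
    have hik : i ≤ k := Nat.lt_succ_iff.mp (Finset.mem_range.mp hi)
    simp only [hu'_def, hv'_def]
    rw [Nat.cast_sub hik]
    ring
  -- summand identity
  have hsummand : ∀ k : ℕ, W n a k x * (((k : ℝ) + α) / ((n : ℝ) + β))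
      = (E / ((n : ℝ) + β)) * (((∑ i ∈ Finset.range (k + 1), u' i * v (k - i))
          + ∑ i ∈ Finset.range (k + 1), u i * v' (k - i))
        + α * ∑ i ∈ Finset.range (k + 1), u i * v (k - i)) := by
    intro k
    rw [hW k, ← hk k]
    ring
  have hfinal : HasSum (fun k : ℕ => W n a k x * (((k : ℝ) + α) / ((n : ℝ) + β)))
      ((E / ((n : ℝ) + β)) * (((((n : ℝ) * t * (1 / (1 - t) ^ (n + 1))) * Real.exp (a * t))
          + (1 / (1 - t) ^ n) * ((a * t) * Real.exp (a * t)))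
        + α * ((1 / (1 - t) ^ n) * Real.exp (a * t)))) := by
    have h := ((hg1.add hg2).add (hg.mul_left α)).mul_left (E / ((n : ℝ) + β))
    exact h.congr_fun hsummand
  rw [Lop, hfinal.tsum_eq]
  -- final algebra
  have hEneg : Real.exp (-(a * x) / (1 + x)) = (Real.exp (a * t))⁻¹ := by
    rw [neg_div, hat, ← Real.exp_neg]
  have hX : Real.exp (a * t) ≠ 0 := (Real.exp_pos _).ne'
  have h1x : (1 + x) ≠ 0 := ne_of_gt hx1
  have hnb : ((n : ℝ) + β) ≠ 0 := ne_of_gt hnβ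
  rw [hE_def, hEneg, h1t, htdef]
  field_simp
  have hinv : (1 + x)⁻¹ * (1 + x) = 1 := inv_mul_cancel₀ h1x
  linear_combination (-(x * (1 + x)⁻¹ ^ n * ↑n)) * hinv
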